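/- Let f be submodular with f(∅)=0 and suppose P is a partition of V such that f(X) = ∑_{C∈P} f(X∩C) for all X ⊆ V. Then for any x ∈ B(f) and any i ∈ V, the set dep(x,i) (the minimal minimizer of min{f(X) − x(X) : i ∈ X ⊆ V}) is contained in the block C ∈ P with i ∈ C. -/
import Mathlib


attribute [local instance] Classical.propDecidable

/-- `X` is a minimizer of `min { f(Y) - x(Y) : i ∈ Y ⊆ V }`. -/
def IsMinimizerAt {V : Type*} [Fintype V] [DecidableEq V]
    (f : Finset V → ℝ) (x : V → ℝ) (i : V) (X : Finset V) : Prop :=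
  i ∈ X ∧ ∀ Y : Finset V, i ∈ Y →
    f X - ∑ k ∈ X, x k ≤ f Y - ∑ k ∈ Y, x k

/-- `dep(x, i)`: the intersection of all minimizers of
`min { f(Y) - x(Y) : i ∈ Y ⊆ V }`. -/
noncomputable def dep {V : Type*} [Fintype V] [DecidableEq V]
    (f : Finset V → ℝ) (x : V → ℝ) (i : V) : Finset V :=
  Finset.univ.filter fun v => ∀ X : Finset V, IsMinimizerAt f x i X → v ∈ X

/-- If a submodular `f` with `f ∅ = 0` decomposes additively across a partition
`P` of `V`, then for any `x ∈ B(f)` and any `i`, the set `dep(x, i)` is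
contained in the block of `P` containing `i`. -/
theorem dep_subset_block {V : Type*} [Fintype V] [DecidableEq V]
    (f : Finset V → ℝ) (P : Finset (Finset V))
    (h0 : f ∅ = 0)
    (hsub : ∀ X Y : Finset V, f (X ∪ Y) + f (X ∩ Y) ≤ f X + f Y)
    (hne : ∀ C ∈ P, C.Nonempty)
    (hdisj : ∀ C ∈ P, ∀ C' ∈ P, C ≠ C' → Disjoint C C')
    (hcover : ∀ i : V, ∃ C ∈ P, i ∈ C)
    (hdec : ∀ X : Finset V, f X = ∑ C ∈ P, f (X ∩ C))
    (x : V → ℝ)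
    (hx : (∀ X : Finset V, ∑ k ∈ X, x k ≤ f X) ∧ ∑ k, x k = f Finset.univ) :
    ∀ (i : V) (C : Finset V), C ∈ P → i ∈ C → dep f x i ⊆ C := by
  intro i C hC hiC
  -- decomposition of x-sums over blocks
  have hxdec : ∀ X : Finset V, ∑ k ∈ X, x k = ∑ C' ∈ P, ∑ k ∈ X ∩ C', x k := by
    intro X
    have hXeq : X = P.biUnion (fun C' => X ∩ C') := by
      ext v
      simp only [Finset.mem_biUnion, Finset.mem_inter]
      constructor
      · intro hv
        obtain ⟨D, hD, hvD⟩ := hcover v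
        exact ⟨D, hD, hv, hvD⟩
      · rintro ⟨D, _, hv, _⟩; exact hv
    conv_lhs => rw [hXeq]
    rw [Finset.sum_biUnion]
    intro A hA B hB hAB
    exact Finset.disjoint_of_subset_left Finset.inter_subset_right
      (Finset.disjoint_of_subset_right Finset.inter_subset_right (hdisj A hA B hB hAB))
  -- key inequality: intersecting a set with C does not increase f(Y) - x(Y)
  have hkey : ∀ X : Finset V, f (X ∩ C) - ∑ k ∈ X ∩ C, x k ≤ f X - ∑ k ∈ X, x k := by
    intro X
    have hd := hdec X
    have hxd := hxdec X
    rw [← Finset.add_sum_erase P _ hC] at hd hxd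
    have h1 : ∀ C' ∈ P.erase C, ∑ k ∈ X ∩ C', x k ≤ f (X ∩ C') := fun C' _ => hx.1 _
    have h2 : ∑ C' ∈ P.erase C, ∑ k ∈ X ∩ C', x k ≤ ∑ C' ∈ P.erase C, f (X ∩ C') :=
      Finset.sum_le_sum h1
    linarith
  -- existence of a minimizer
  obtain ⟨X, hXmem, hXmin⟩ := Finset.exists_min_image
    (Finset.univ.filter fun Y : Finset V => i ∈ Y)
    (fun Y => f Y - ∑ k ∈ Y, x k)
    ⟨Finset.univ, by simp⟩
  have hiX : i ∈ X := (Finset.mem_filter.mp hXmem).2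
  have hXisMin : IsMinimizerAt f x i X := by
    refine ⟨hiX, fun Y hY => ?_⟩
    exact hXmin Y (Finset.mem_filter.mpr ⟨Finset.mem_univ _, hY⟩)
  -- X ∩ C is also a minimizer
  have hXC : IsMinimizerAt f x i (X ∩ C) := by
    refine ⟨Finset.mem_inter.mpr ⟨hiX, hiC⟩, fun Y hY => ?_⟩
    exact le_trans (hkey X) (hXisMin.2 Y hY)
  intro v hv
  have := (Finset.mem_filter.mp hv).2 (X ∩ C) hXC
  exact (Finset.mem_inter.mp this).2
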